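/- Let Ω ⊆ ℝ^m be compact, let H_ω (ω ∈ Ω) be symmetric positive definite n×n matrices with H_lb ⪯ H_ω ⪯ H_ub for fixed symmetric positive definite H_lb, H_ub, and let T : ℝⁿ × Ω → ℝⁿ satisfy ‖T(u₁,ω) − T(u₂,ω)‖_{H_ω} ≤ ρ‖u₁ − u₂‖_{H_ω} for all u₁, u₂ ∈ ℝⁿ and ω ∈ Ω, for some ρ ∈ (0,1). Let u*(ω) denote the unique fixed point of T(·,ω), and assume sup_{ω∈Ω} ‖u*(ω)‖ < ∞. Let ℓ : ℝⁿ × Ω → ℝ be such that each ℓ(·,ω) is convex and differentiable with L-Lipschitz gradient, with M* := sup_{ω∈Ω} ‖∇_u ℓ(u*(ω),ω)‖ < ∞. Fix μ ∈ (0,1), s ∈ (0, λ_min(H_lb)/L), u⁰ ∈ ℝⁿ, and define for each ω ∈ Ω and k ≥ 0: u^{k+1}(ω) := μ·(u^k(ω) − (s/(k+2))·H_ω⁻¹∇_u ℓ(u^k(ω),ω)) + (1−μ)·T(u^k(ω),ω), with u^0(ω) := u⁰. Then sup_{ω∈Ω} ‖u^k(ω) − u*(ω)‖_{H_ω} → 0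 as k → ∞. -/

import Mathlib

open scoped RealInnerProductSpace
open Filter Topology

/-- The `H`-inner product `⟨u, v⟩_H = uᵀ H v` on `ℝⁿ`. -/
noncomputable def hIP {n : ℕ} (H : Matrix (Fin n) (Fin n) ℝ)
    (u v : EuclideanSpace ℝ (Fin n)) : ℝ :=
  ⟪u, Matrix.toEuclideanLin H v⟫

/-- The `H`-norm `‖u‖_H = √(uᵀ H u)` on `ℝⁿ`. -/
noncomputable def hNorm {n : ℕ} (H : Matrix (Fin n) (Fin n) ℝ)
    (u : EuclideanSpace ℝ (Fin n)) : ℝ :=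
  Real.sqrt (hIP H u u)

/-- The smallest eigenvalue `λ_min(H)` of a Hermitian matrix `H`. -/
noncomputable def lambdaMin {n : ℕ} (H : Matrix (Fin n) (Fin n) ℝ)
    (hH : H.IsHermitian) : ℝ :=
  ⨅ i, hH.eigenvalues i

open scoped MatrixOrder in
noncomputable def Matrix.PosSemidef.sqrt {n : ℕ} {H : Matrix (Fin n) (Fin n) ℝ}
    (_ : H.PosSemidef) : Matrix (Fin n) (Fin n) ℝ := CFC.sqrt H

open scoped MatrixOrder in
lemma Matrix.PosSemidef.sqrt_mul_self {n : ℕ} {H : Matrix (Fin n) (Fin n) ℝ}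
    (hH : H.PosSemidef) : hH.sqrt * hH.sqrt = H :=
  CFC.sqrt_mul_sqrt_self H hH.nonneg

open scoped MatrixOrder in
lemma Matrix.PosSemidef.posSemidef_sqrt {n : ℕ} {H : Matrix (Fin n) (Fin n) ℝ}
    (hH : H.PosSemidef) : hH.sqrt.PosSemidef :=
  Matrix.nonneg_iff_posSemidef.mp (CFC.sqrt_nonneg H)

lemma hIP_eq_sq {n : ℕ} {H : Matrix (Fin n) (Fin n) ℝ} (hH : H.PosSemidef)
    (x : EuclideanSpace ℝ (Fin n)) :
    hIP H x x = ‖Matrix.toEuclideanLin hH.sqrt x‖ ^ 2 := by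
  have h1 : Matrix.toEuclideanLin H x
      = Matrix.toEuclideanLin hH.sqrt (Matrix.toEuclideanLin hH.sqrt x) := by
    conv_lhs => rw [← hH.sqrt_mul_self]
    simp [Matrix.toEuclideanLin_apply, Matrix.mulVec_mulVec]
  have hsym : (Matrix.toEuclideanLin hH.sqrt).IsSymmetric :=
    Matrix.isHermitian_iff_isSymmetric.mp hH.posSemidef_sqrt.1
  rw [hIP, h1, ← hsym x, real_inner_self_eq_norm_sq]

lemma hNorm_eq {n : ℕ} {H : Matrix (Fin n) (Fin n) ℝ} (hH : H.PosSemidef)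
    (x : EuclideanSpace ℝ (Fin n)) :
    hNorm H x = ‖Matrix.toEuclideanLin hH.sqrt x‖ := by
  rw [hNorm, hIP_eq_sq hH, Real.sqrt_sq (norm_nonneg _)]

lemma hNorm_nonneg' {n : ℕ} (H : Matrix (Fin n) (Fin n) ℝ)
    (x : EuclideanSpace ℝ (Fin n)) : 0 ≤ hNorm H x := Real.sqrt_nonneg _

lemma hNorm_sq {n : ℕ} {H : Matrix (Fin n) (Fin n) ℝ} (hH : H.PosSemidef)
    (x : EuclideanSpace ℝ (Fin n)) : hNorm H x ^ 2 = hIP H x x := by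
  rw [hNorm_eq hH, hIP_eq_sq hH]

lemma hNorm_smul {n : ℕ} {H : Matrix (Fin n) (Fin n) ℝ} (hH : H.PosSemidef)
    (c : ℝ) (x : EuclideanSpace ℝ (Fin n)) :
    hNorm H (c • x) = |c| * hNorm H x := by
  rw [hNorm_eq hH, hNorm_eq hH, map_smul, norm_smul, Real.norm_eq_abs]

lemma hNorm_add_le {n : ℕ} {H : Matrix (Fin n) (Fin n) ℝ} (hH : H.PosSemidef)
    (x y : EuclideanSpace ℝ (Fin n)) :
    hNorm H (x + y) ≤ hNorm H x + hNorm H y := by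
  rw [hNorm_eq hH, hNorm_eq hH, hNorm_eq hH, map_add]
  exact norm_add_le _ _

lemma hNorm_sub_le' {n : ℕ} {H : Matrix (Fin n) (Fin n) ℝ} (hH : H.PosSemidef)
    (x y : EuclideanSpace ℝ (Fin n)) :
    hNorm H (x - y) ≤ hNorm H x + hNorm H y := by
  rw [hNorm_eq hH, hNorm_eq hH, hNorm_eq hH, map_sub]
  exact norm_sub_le _ _

lemma hIP_pos {n : ℕ} {H : Matrix (Fin n) (Fin n) ℝ} (hH : H.PosDef)
    {x : EuclideanSpace ℝ (Fin n)} (hx : x ≠ 0) : 0 < hIP H x x := by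
  have hx' : (WithLp.equiv 2 (Fin n → ℝ)) x ≠ 0 := by
    simpa using hx
  have := hH.re_dotProduct_pos (x := (WithLp.equiv 2 (Fin n → ℝ)) x) hx'
  simpa [hIP, Matrix.toEuclideanLin_apply, PiLp.inner_apply, dotProduct,
    RCLike.re_to_real, mul_comm] using this

lemma exists_posdef_lb {n : ℕ} {H : Matrix (Fin n) (Fin n) ℝ} (hH : H.PosDef) :
    ∃ c : ℝ, 0 < c ∧ ∀ x : EuclideanSpace ℝ (Fin n), c * ‖x‖ ^ 2 ≤ hIP H x x := by
  set f := Matrix.toEuclideanLin hH.posSemidef.sqrt with hf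
  have hinj : Function.Injective f := by
    rw [injective_iff_map_eq_zero]
    intro x hx0
    by_contra hxne
    have h1 : Matrix.toEuclideanLin H x = f (f x) := by
      conv_lhs => rw [← hH.posSemidef.sqrt_mul_self]
      simp [hf, Matrix.toEuclideanLin_apply, Matrix.mulVec_mulVec]
    have h2 : hIP H x x = 0 := by
      rw [hIP, h1, hx0, map_zero, inner_zero_right]
    exact absurd h2 (hIP_pos hH hxne).ne'
  have hsurj : Function.Surjective f := LinearMap.injective_iff_surjective.mp hinj
  let e : EuclideanSpace ℝ (Fin n) ≃ₗ[ℝ] EuclideanSpace ℝ (Fin n) :=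
    LinearEquiv.ofBijective f ⟨hinj, hsurj⟩
  let E := e.toContinuousLinearEquiv
  set C := ‖(E.symm : EuclideanSpace ℝ (Fin n) →L[ℝ] EuclideanSpace ℝ (Fin n))‖ with hC
  have hC0 : 0 ≤ C := norm_nonneg _
  refine ⟨1 / (C + 1) ^ 2, by positivity, fun x => ?_⟩
  have hb : ‖x‖ ≤ (C + 1) * ‖f x‖ := by
    have h1 : E.symm (E x) = x := E.symm_apply_apply x
    have h2 : (E x : EuclideanSpace ℝ (Fin n)) = f x := rfl
    calc ‖x‖ = ‖E.symm (E x)‖ := by rw [h1]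
    _ ≤ C * ‖(E x : EuclideanSpace ℝ (Fin n))‖ :=
      (E.symm : EuclideanSpace ℝ (Fin n) →L[ℝ] EuclideanSpace ℝ (Fin n)).le_opNorm _
    _ ≤ (C + 1) * ‖f x‖ := by
      rw [h2]; nlinarith [norm_nonneg (f x)]
  have hsq : ‖x‖ ^ 2 ≤ (C + 1) ^ 2 * ‖f x‖ ^ 2 := by
    nlinarith [norm_nonneg x, norm_nonneg (f x)]
  rw [hIP_eq_sq hH.posSemidef]
  rw [div_mul_eq_mul_div, one_mul, div_le_iff₀ (by positivity)]
  calc ‖x‖ ^ 2 ≤ (C+1)^2 * ‖f x‖^2 := hsq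
  _ = ‖f x‖ ^ 2 * (C+1)^2 := by ring

lemma exists_ub {n : ℕ} (H : Matrix (Fin n) (Fin n) ℝ) :
    ∃ C : ℝ, 0 ≤ C ∧ ∀ x : EuclideanSpace ℝ (Fin n), hIP H x x ≤ C * ‖x‖ ^ 2 := by
  let φ := LinearMap.toContinuousLinearMap (Matrix.toEuclideanLin H)
  refine ⟨‖φ‖, norm_nonneg _, fun x => ?_⟩
  have h1 : hIP H x x = ⟪x, φ x⟫ := rfl
  calc hIP H x x = ⟪x, φ x⟫ := h1
  _ ≤ ‖x‖ * ‖φ x‖ := real_inner_le_norm _ _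
  _ ≤ ‖x‖ * (‖φ‖ * ‖x‖) := by
      have := φ.le_opNorm x
      exact mul_le_mul_of_nonneg_left this (norm_nonneg x)
  _ = ‖φ‖ * ‖x‖ ^ 2 := by ring

/-- auxiliary dominating sequence -/
noncomputable def seqB (A0 r c d : ℝ) : ℕ → ℝ
  | 0 => A0
  | k+1 => (r + c / ((k : ℝ) + 2)) * seqB A0 r c d k + d / ((k : ℝ) + 2)

lemma seqB_nonneg {A0 r c d : ℝ} (hA0 : 0 ≤ A0) (hr : 0 ≤ r) (hc : 0 ≤ c)
    (hd : 0 ≤ d) : ∀ k, 0 ≤ seqB A0 r c d k := by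
  intro k
  induction k with
  | zero => exact hA0
  | succ k ih =>
    have hk2 : (0:ℝ) < (k : ℝ) + 2 := by positivity
    have h1 : 0 ≤ r + c / ((k:ℝ)+2) := by positivity
    have h2 : 0 ≤ (r + c / ((k:ℝ)+2)) * seqB A0 r c d k := mul_nonneg h1 ih
    simp only [seqB]
    positivity

lemma seqB_tendsto {A0 r c d : ℝ} (hA0 : 0 ≤ A0) (hr0 : 0 ≤ r) (hr1 : r < 1)
    (hc : 0 ≤ c) (hd : 0 ≤ d) :
    ∀ ε > (0:ℝ), ∃ K : ℕ, ∀ k, K ≤ k → seqB A0 r c d k ≤ ε := by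
  intro ε hε
  set q : ℝ := (1 + r) / 2 with hq
  have hq0 : 0 < q := by rw [hq]; linarith
  have hq1 : q < 1 := by rw [hq]; linarith
  obtain ⟨K1, hK1⟩ : ∃ K1 : ℕ, ∀ k : ℕ, K1 ≤ k →
      c / ((k:ℝ)+2) ≤ (1 - r)/2 ∧ d / ((k:ℝ)+2) ≤ (1-q)*ε/2 := by
    obtain ⟨N, hN⟩ := exists_nat_gt (max (2*c/(1-r)) (2*d/((1-q)*ε)))
    refine ⟨N, fun k hk => ?_⟩
    have hk2 : (0:ℝ) < (k:ℝ) + 2 := by positivity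
    have hNk : (N : ℝ) ≤ (k:ℝ) + 2 := by
      have : (N:ℝ) ≤ (k:ℝ) := by exact_mod_cast hk
      linarith
    constructor
    · rw [div_le_iff₀ hk2]
      have h1 : 2*c/(1-r) < (k:ℝ)+2 := lt_of_le_of_lt (le_max_left _ _) (lt_of_lt_of_le hN hNk)
      rw [div_lt_iff₀ (by linarith : (0:ℝ) < 1-r)] at h1
      linarith
    · rw [div_le_iff₀ hk2]
      have hqe : (0:ℝ) < (1-q)*ε := mul_pos (by linarith) hε
      have h1 : 2*d/((1-q)*ε) < (k:ℝ)+2 := lt_of_le_of_lt (le_max_right _ _) (lt_of_lt_of_le hN hNk)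
      rw [div_lt_iff₀ hqe] at h1
      linarith
  set b := seqB A0 r c d with hb
  have hbnn := seqB_nonneg hA0 hr0 hc hd
  have key : ∀ j : ℕ, b (K1 + j) ≤ q ^ j * b K1 + ε/2 := by
    intro j
    induction j with
    | zero => simp; linarith
    | succ j ih =>
      have hcoef : r + c / (((K1 + j : ℕ):ℝ)+2) ≤ q := by
        have := (hK1 (K1+j) (Nat.le_add_right _ _)).1
        rw [hq]; linarith
      have hcoef0 : 0 ≤ r + c / (((K1 + j : ℕ):ℝ)+2) := by positivity
      have hdle := (hK1 (K1+j) (Nat.le_add_right _ _)).2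
      have hstep : b (K1 + (j+1)) = (r + c / (((K1 + j : ℕ):ℝ)+2)) * b (K1 + j)
          + d / (((K1 + j : ℕ):ℝ)+2) := by
        show seqB A0 r c d ((K1 + j) + 1) = _
        rfl
      rw [hstep]
      calc (r + c / (((K1 + j : ℕ):ℝ)+2)) * b (K1 + j) + d / (((K1 + j : ℕ):ℝ)+2)
          ≤ q * b (K1 + j) + (1-q)*ε/2 :=
            add_le_add (mul_le_mul_of_nonneg_right hcoef (hbnn _)) hdle
      _ ≤ q * (q ^ j * b K1 + ε/2) + (1-q)*ε/2 :=
            add_le_add_left (mul_le_mul_of_nonneg_left ih hq0.le) _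
      _ = q ^ (j+1) * b K1 + ε/2 := by ring
  have hb1 : (0:ℝ) < b K1 + 1 := by have := hbnn K1; linarith
  obtain ⟨nn, hnn⟩ := exists_pow_lt_of_lt_one
    (div_pos (by linarith : (0:ℝ) < ε/2) hb1) hq1
  refine ⟨K1 + nn, fun k hk => ?_⟩
  obtain ⟨j, rfl⟩ : ∃ j, k = K1 + j := ⟨k - K1, by omega⟩
  have hjnn : nn ≤ j := by omega
  have hpow : q ^ j ≤ q ^ nn := pow_le_pow_of_le_one hq0.le hq1.le hjnn
  have h1 : q ^ j * b K1 ≤ q ^ nn * (b K1 + 1) := by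
    have := hbnn K1
    nlinarith [pow_nonneg hq0.le nn]
  have h2 : q ^ nn * (b K1 + 1) < ε/2 := by
    rw [lt_div_iff₀ hb1] at hnn
    exact hnn
  calc b (K1 + j) ≤ q ^ j * b K1 + ε/2 := key j
  _ ≤ q ^ nn * (b K1 + 1) + ε/2 := by linarith
  _ ≤ ε := by linarith

set_option maxHeartbeats 1000000 in
/-- uniform convergence of the aggregated iterates to the unique
fixed point `u*(ω)` of the contraction `T(·,ω)` (Eq. (A.55) of the paper):
`sup_{ω∈Ω} ‖u^k(ω) − u*(ω)‖_{H_ω} → 0`. -/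
theorem stmt_14 {n m : ℕ}
    (Ω : Set (EuclideanSpace ℝ (Fin m))) (hΩcp : IsCompact Ω)
    (Hlb Hub : Matrix (Fin n) (Fin n) ℝ) (hlb : Hlb.PosDef) (hub : Hub.PosDef)
    (HM : EuclideanSpace ℝ (Fin m) → Matrix (Fin n) (Fin n) ℝ)
    (hHM : ∀ ω ∈ Ω, (HM ω).PosDef)
    (hHMlb : ∀ ω ∈ Ω, ∀ x, hIP Hlb x x ≤ hIP (HM ω) x x)
    (hHMub : ∀ ω ∈ Ω, ∀ x, hIP (HM ω) x x ≤ hIP Hub x x)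
    (T : EuclideanSpace ℝ (Fin n) → EuclideanSpace ℝ (Fin m) → EuclideanSpace ℝ (Fin n))
    (ρ : ℝ) (hρ : ρ ∈ Set.Ioo (0 : ℝ) 1)
    (hT : ∀ ω ∈ Ω, ∀ u₁ u₂,
      hNorm (HM ω) (T u₁ ω - T u₂ ω) ≤ ρ * hNorm (HM ω) (u₁ - u₂))
    (ustar : EuclideanSpace ℝ (Fin m) → EuclideanSpace ℝ (Fin n))
    (hustar : ∀ ω ∈ Ω, T (ustar ω) ω = ustar ω)
    (hustarbdd : ∃ B : ℝ, ∀ ω ∈ Ω, ‖ustar ω‖ ≤ B)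
    (ℓ : EuclideanSpace ℝ (Fin n) → EuclideanSpace ℝ (Fin m) → ℝ)
    (L : ℝ) (hL : 0 < L)
    (hconv : ∀ ω ∈ Ω, ConvexOn ℝ Set.univ fun x => ℓ x ω)
    (hdiff : ∀ ω ∈ Ω, Differentiable ℝ fun x => ℓ x ω)
    (hLip : ∀ ω ∈ Ω, ∀ u v,
      ‖gradient (fun x => ℓ x ω) u - gradient (fun x => ℓ x ω) v‖ ≤ L * ‖u - v‖)
    (hMstar : ∃ Mstar : ℝ, ∀ ω ∈ Ω,
      ‖gradient (fun x => ℓ x ω) (ustar ω)‖ ≤ Mstar)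
    (μ : ℝ) (hμ : μ ∈ Set.Ioo (0 : ℝ) 1)
    (s : ℝ) (hs : s ∈ Set.Ioo 0 (lambdaMin Hlb hlb.1 / L))
    (u0 : EuclideanSpace ℝ (Fin n))
    (u : ℕ → EuclideanSpace ℝ (Fin m) → EuclideanSpace ℝ (Fin n))
    (hu0 : ∀ ω ∈ Ω, u 0 ω = u0)
    (hrec : ∀ ω ∈ Ω, ∀ k : ℕ, u (k + 1) ω =
      μ • (u k ω - (s / ((k : ℝ) + 2)) •
        Matrix.toEuclideanLin (HM ω)⁻¹ (gradient (fun x => ℓ x ω) (u k ω)))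
      + (1 - μ) • T (u k ω) ω) :
    ∀ ε > (0 : ℝ), ∃ K : ℕ, ∀ k, K ≤ k → ∀ ω ∈ Ω,
      hNorm (HM ω) (u k ω - ustar ω) ≤ ε := by
  obtain ⟨hμ0, hμ1⟩ := hμ
  obtain ⟨hρ0, hρ1⟩ := hρ
  obtain ⟨hs0, _⟩ := hs
  obtain ⟨B, hB⟩ := hustarbdd
  obtain ⟨M0, hM0⟩ := hMstar
  obtain ⟨lam0, hlam0pos, hlam0⟩ := exists_posdef_lb hlb
  obtain ⟨Cub, hCub0, hCub⟩ := exists_ub Hub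
  set slam : ℝ := Real.sqrt lam0 with hslam
  have hslam0 : 0 < slam := Real.sqrt_pos.mpr hlam0pos
  have hslamsq : slam ^ 2 = lam0 := Real.sq_sqrt hlam0pos.le
  set B' : ℝ := max B 0 with hB'
  set M0' : ℝ := max M0 0 with hM0'
  have hM0'0 : 0 ≤ M0' := le_max_right _ _
  -- lower comparison
  have hlow : ∀ ω ∈ Ω, ∀ x : EuclideanSpace ℝ (Fin n),
      slam * ‖x‖ ≤ hNorm (HM ω) x := by
    intro ω hω x
    have h1 : lam0 * ‖x‖ ^ 2 ≤ hIP (HM ω) x x := (hlam0 x).trans (hHMlb ω hω x)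
    have h2 : slam * ‖x‖ = Real.sqrt (lam0 * ‖x‖ ^ 2) := by
      rw [Real.sqrt_mul hlam0pos.le, Real.sqrt_sq (norm_nonneg x)]
    rw [hNorm, h2]
    exact Real.sqrt_le_sqrt h1
  -- upper comparison
  have hup : ∀ ω ∈ Ω, ∀ x : EuclideanSpace ℝ (Fin n),
      hNorm (HM ω) x ≤ Real.sqrt Cub * ‖x‖ := by
    intro ω hω x
    have h1 : hIP (HM ω) x x ≤ Cub * ‖x‖ ^ 2 := (hHMub ω hω x).trans (hCub x)
    have h2 : Real.sqrt Cub * ‖x‖ = Real.sqrt (Cub * ‖x‖ ^ 2) := by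
      rw [Real.sqrt_mul hCub0, Real.sqrt_sq (norm_nonneg x)]
    rw [hNorm, h2]
    exact Real.sqrt_le_sqrt h1
  -- constants
  set r : ℝ := μ + (1 - μ) * ρ with hr
  have hr0 : 0 ≤ r := by nlinarith
  have hr1 : r < 1 := by nlinarith
  set c : ℝ := μ * s * L / (slam * slam) with hc
  have hc0 : 0 ≤ c := by positivity
  set d : ℝ := μ * s * M0' / slam with hd
  have hd0 : 0 ≤ d := by positivity
  set A0 : ℝ := Real.sqrt Cub * (‖u0‖ + B') with hA0def
  have hA00 : 0 ≤ A0 := by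
    have : (0:ℝ) ≤ B' := le_max_right _ _
    have h2 : 0 ≤ ‖u0‖ + B' := by positivity
    positivity
  -- gradient bound through the inverse matrix
  have hinvbd : ∀ ω ∈ Ω, ∀ g : EuclideanSpace ℝ (Fin n),
      hNorm (HM ω) (Matrix.toEuclideanLin (HM ω)⁻¹ g) ≤ ‖g‖ / slam := by
    intro ω hω g
    set v := Matrix.toEuclideanLin (HM ω)⁻¹ g with hv
    have hps := (hHM ω hω).posSemidef
    have hHv : Matrix.toEuclideanLin (HM ω) v = g := by
      have hdet : IsUnit (HM ω).det := (hHM ω hω).det_pos.ne'.isUnit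
      have hinv : HM ω * (HM ω)⁻¹ = 1 := Matrix.mul_nonsing_inv _ hdet
      rw [hv]
      simp [Matrix.toEuclideanLin_apply, Matrix.mulVec_mulVec, hinv,
        Matrix.one_mulVec]
    have hsqv : hNorm (HM ω) v ^ 2 = ⟪v, g⟫ := by
      rw [hNorm_sq hps, hIP, hHv]
    have hip : (⟪v, g⟫:ℝ) ≤ ‖v‖ * ‖g‖ := real_inner_le_norm _ _
    have hvle : slam * ‖v‖ ≤ hNorm (HM ω) v := hlow ω hω v
    rcases eq_or_lt_of_le (hNorm_nonneg' (HM ω) v) with h0 | h0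
    · rw [← h0]; positivity
    · have h3 : hNorm (HM ω) v ^ 2 ≤ ‖v‖ * ‖g‖ := by rw [hsqv]; exact hip
      rw [le_div_iff₀ hslam0]
      nlinarith [mul_le_mul_of_nonneg_left h3 hslam0.le,
        mul_le_mul_of_nonneg_right hvle (norm_nonneg g), h0, hslam0]
  -- the main recursive estimate
  have hmain : ∀ ω ∈ Ω, ∀ k : ℕ,
      hNorm (HM ω) (u (k+1) ω - ustar ω) ≤
        (r + c / ((k:ℝ)+2)) * hNorm (HM ω) (u k ω - ustar ω) + d / ((k:ℝ)+2) := by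
    intro ω hω k
    set gk := gradient (fun x => ℓ x ω) (u k ω) with hgk
    set v := Matrix.toEuclideanLin (HM ω)⁻¹ gk with hv
    set a := hNorm (HM ω) (u k ω - ustar ω) with ha
    have ha0 : 0 ≤ a := hNorm_nonneg' _ _
    have hps := (hHM ω hω).posSemidef
    have hid : u (k+1) ω - ustar ω =
        (μ • (u k ω - ustar ω) + (1-μ) • (T (u k ω) ω - T (ustar ω) ω))
        - (μ * (s / ((k:ℝ)+2))) • v := by
      rw [hrec ω hω k, hustar ω hω]
      module
    have hk2 : (0:ℝ) < (k:ℝ) + 2 := by positivity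
    have hη0 : 0 ≤ μ * (s / ((k:ℝ)+2)) := by positivity
    have hT1 : hNorm (HM ω) (T (u k ω) ω - T (ustar ω) ω) ≤ ρ * a :=
      hT ω hω (u k ω) (ustar ω)
    have hgkb : ‖gk‖ ≤ M0' + L * (a / slam) := by
      have h1 : ‖gk - gradient (fun x => ℓ x ω) (ustar ω)‖ ≤ L * ‖u k ω - ustar ω‖ :=
        hLip ω hω (u k ω) (ustar ω)
      have h2 : ‖u k ω - ustar ω‖ ≤ a / slam := by
        rw [le_div_iff₀ hslam0]
        have := hlow ω hω (u k ω - ustar ω)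
        linarith
      have h3 : ‖gk‖ ≤ ‖gradient (fun x => ℓ x ω) (ustar ω)‖
          + ‖gk - gradient (fun x => ℓ x ω) (ustar ω)‖ := by
        have := norm_add_le (gradient (fun x => ℓ x ω) (ustar ω))
          (gk - gradient (fun x => ℓ x ω) (ustar ω))
        simpa using this
      have h4 : ‖gradient (fun x => ℓ x ω) (ustar ω)‖ ≤ M0' :=
        (hM0 ω hω).trans (le_max_left _ _)
      have h5 : L * ‖u k ω - ustar ω‖ ≤ L * (a / slam) :=
        mul_le_mul_of_nonneg_left h2 hL.le
      linarith
    have hvb : hNorm (HM ω) v ≤ (M0' + L * (a / slam)) / slam := by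
      refine (hinvbd ω hω gk).trans ?_
      gcongr
    have hchain : hNorm (HM ω) (u (k+1) ω - ustar ω) ≤
        μ * a + (1-μ) * (ρ * a) + (μ * (s / ((k:ℝ)+2))) * ((M0' + L * (a / slam)) / slam) := by
      rw [hid]
      refine (hNorm_sub_le' hps _ _).trans ?_
      have t1 : hNorm (HM ω) (μ • (u k ω - ustar ω) + (1-μ) • (T (u k ω) ω - T (ustar ω) ω))
          ≤ μ * a + (1-μ) * (ρ * a) := by
        refine (hNorm_add_le hps _ _).trans ?_
        have e1 : hNorm (HM ω) (μ • (u k ω - ustar ω)) = μ * a := by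
          rw [hNorm_smul hps, abs_of_nonneg hμ0.le]
        have e2 : hNorm (HM ω) ((1-μ) • (T (u k ω) ω - T (ustar ω) ω))
            ≤ (1-μ) * (ρ * a) := by
          rw [hNorm_smul hps, abs_of_nonneg (by linarith : (0:ℝ) ≤ 1-μ)]
          exact mul_le_mul_of_nonneg_left hT1 (by linarith)
        linarith
      have t2 : hNorm (HM ω) ((μ * (s / ((k:ℝ)+2))) • v)
          ≤ (μ * (s / ((k:ℝ)+2))) * ((M0' + L * (a / slam)) / slam) := by
        rw [hNorm_smul hps, abs_of_nonneg hη0]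
        exact mul_le_mul_of_nonneg_left hvb hη0
      linarith
    have heq : ∀ A : ℝ, μ * A + (1-μ) * (ρ * A)
        + (μ * (s / ((k:ℝ)+2))) * ((M0' + L * (A / slam)) / slam)
        = (r + c / ((k:ℝ)+2)) * A + d / ((k:ℝ)+2) := by
      intro A
      rw [hr, hc, hd]
      have hkne : ((k:ℝ)+2) ≠ 0 := hk2.ne'
      have hsne : slam ≠ 0 := hslam0.ne'
      field_simp
      ring
    exact hchain.trans (le_of_eq (heq a))
  -- transfer to the dominating sequence
  have htrans : ∀ k : ℕ, ∀ ω ∈ Ω,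
      hNorm (HM ω) (u k ω - ustar ω) ≤ seqB A0 r c d k := by
    intro k
    induction k with
    | zero =>
      intro ω hω
      rw [hu0 ω hω]
      show hNorm (HM ω) (u0 - ustar ω) ≤ A0
      refine (hup ω hω _).trans ?_
      rw [hA0def]
      have h1 : ‖u0 - ustar ω‖ ≤ ‖u0‖ + B' := by
        have := norm_sub_le u0 (ustar ω)
        have h2 : ‖ustar ω‖ ≤ B' := (hB ω hω).trans (le_max_left _ _)
        linarith
      exact mul_le_mul_of_nonneg_left h1 (Real.sqrt_nonneg _)
    | succ k ih =>
      intro ω hω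
      have hco : 0 ≤ r + c / ((k:ℝ)+2) := by positivity
      calc hNorm (HM ω) (u (k+1) ω - ustar ω)
          ≤ (r + c / ((k:ℝ)+2)) * hNorm (HM ω) (u k ω - ustar ω) + d / ((k:ℝ)+2) :=
            hmain ω hω k
      _ ≤ (r + c / ((k:ℝ)+2)) * seqB A0 r c d k + d / ((k:ℝ)+2) := by
            have := ih ω hω
            have := mul_le_mul_of_nonneg_left (ih ω hω) hco
            linarith
      _ = seqB A0 r c d (k+1) := rfl
  intro ε hε
  obtain ⟨K, hK⟩ := seqB_tendsto hA00 hr0 hr1 hc0 hd0 ε hε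
  exact ⟨K, fun k hk ω hω => (htrans k ω hω).trans (hK k hk)⟩
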